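/- For every integer n ≥ 2 and every k ∈ {1,…,n}, the misclassification probability of the plug-in rule satisfies P(Î_k ≠ I_k) ≤ λ + 1/n + (2/α₂)·(log n)/n; consequently the maximal misclassification error φ_n = max_{1≤k≤n} P(Î_k ≠ I_k) is bounded by λ + 1/n + (2/α₂)·(log n)/n. -/

import Mathlib

open MeasureTheory ProbabilityTheory

/-- Integral of the indicator of an interval over a set equals the volume of the
intersection. -/
lemma integral_indicator_Icc_aux (s : Set ℝ) (hs : MeasurableSet s) (a b : ℝ) :
    ∫ t in s, (Set.Icc a b).indicator (fun _ => (1 : ℝ)) t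
      = (volume (s ∩ Set.Icc a b)).toReal := by
  rw [MeasureTheory.setIntegral_indicator measurableSet_Icc]
  simp [MeasureTheory.integral_const, Measure.restrict_apply_univ]
  rfl

/-- Proposition 1: for the two-component uniform mixture with overlap `λ` and the plug-in
classification rule based on `λ̂ = 2 − max_k X_k`, every `k` satisfies
`P(Î_k ≠ I_k) ≤ λ + 1/n + (2/α₂)(log n)/n`; consequently the maximal misclassification
error `φ_n = max_k P(Î_k ≠ I_k)` satisfies the same bound. -/
theorem stmt_3 {Ω : Type*} [MeasurableSpace Ω] (P : Measure Ω) [IsProbabilityMeasure P]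
    (n : ℕ) (hn : 2 ≤ n) (lam : ℝ) (hlam : lam ∈ Set.Ioo (0 : ℝ) 1)
    (X : Fin n → Ω → ℝ) (I : Fin n → Ω → ℕ)
    (hXmeas : ∀ k, Measurable (X k)) (hImeas : ∀ k, Measurable (I k))
    (hIrange : ∀ k ω, I k ω = 1 ∨ I k ω = 2)
    -- the pairs (X_k, I_k) are i.i.d.
    (hindep : iIndepFun (fun k ω => (X k ω, I k ω)) P)
    (hident : ∀ k : Fin n,
      Measure.map (fun ω => (X k ω, I k ω)) P
        = Measure.map (fun ω => (X ⟨0, by omega⟩ ω, I ⟨0, by omega⟩ ω)) P)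
    -- mixture weights
    (α : ℕ → ℝ) (hα : ∀ i, α i = (P {ω | I ⟨0, by omega⟩ ω = i}).toReal)
    (hα1 : α 1 ∈ Set.Ioo (0 : ℝ) 1) (hα2 : α 2 ∈ Set.Ioo (0 : ℝ) 1)
    -- conditional densities: g₁ = 1_{[0,1]} and g₂ = 1_{[1−λ, 2−λ]}
    (hg1 : ∀ s : Set ℝ, MeasurableSet s →
      (P ({ω | I ⟨0, by omega⟩ ω = 1} ∩ (X ⟨0, by omega⟩) ⁻¹' s)).toReal
        = α 1 * ∫ t in s, (Set.Icc (0 : ℝ) 1).indicator (fun _ => (1 : ℝ)) t)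
    (hg2 : ∀ s : Set ℝ, MeasurableSet s →
      (P ({ω | I ⟨0, by omega⟩ ω = 2} ∩ (X ⟨0, by omega⟩) ⁻¹' s)).toReal
        = α 2 * ∫ t in s, (Set.Icc (1 - lam) (2 - lam)).indicator (fun _ => (1 : ℝ)) t)
    -- plug-in estimate of λ and predicted labels
    (lamhat : Ω → ℝ)
    (hlamhat : ∀ ω, lamhat ω
      = 2 - Finset.univ.sup' ⟨⟨0, by omega⟩, Finset.mem_univ _⟩ (fun k => X k ω))
    (Ihat : Fin n → Ω → ℕ)
    (hIhat : ∀ k ω, Ihat k ω =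
      if 1 ≤ X k ω then 2 else if X k ω ≤ 1 - lamhat ω then 1 else 0) :
    (∀ k, (P {ω | Ihat k ω ≠ I k ω}).toReal
        ≤ lam + 1 / n + 2 / α 2 * Real.log n / n) ∧
      Finset.univ.sup' ⟨⟨0, by omega⟩, Finset.mem_univ _⟩
          (fun k => (P {ω | Ihat k ω ≠ I k ω}).toReal)
        ≤ lam + 1 / n + 2 / α 2 * Real.log n / n := by
  obtain ⟨hlam0, hlam1⟩ := hlam
  obtain ⟨hα1p, hα1l⟩ := hα1
  obtain ⟨hα2p, hα2l⟩ := hα2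
  have hnpos : (0 : ℝ) < n := by positivity
  have hn1 : (1 : ℝ) < n := by exact_mod_cast hn
  have hlogn : 0 < Real.log n := Real.log_pos hn1
  set δ : ℝ := 2 / α 2 * Real.log n / n with hδdef
  have hδpos : 0 < δ := by positivity
  have k0 : Fin n := ⟨0, by omega⟩
  -- abbreviations
  set X0 : Ω → ℝ := X ⟨0, by omega⟩ with hX0
  set I0 : Ω → ℕ := I ⟨0, by omega⟩ with hI0
  -- α 1 + α 2 = 1
  have hαsum : α 1 + α 2 = 1 := by
    have hdisj : Disjoint {ω | I0 ω = 1} {ω | I0 ω = 2} := by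
      rw [Set.disjoint_left]; intro ω h1 h2
      simp only [Set.mem_setOf_eq] at h1 h2; omega
    have hcover : {ω | I0 ω = 1} ∪ {ω | I0 ω = 2} = Set.univ := by
      ext ω; simpa using hIrange _ ω
    have : P ({ω | I0 ω = 1} ∪ {ω | I0 ω = 2}) = P {ω | I0 ω = 1} + P {ω | I0 ω = 2} :=
      measure_union hdisj ((hImeas _) (measurableSet_singleton 2))
    rw [hcover] at this
    rw [hα 1, hα 2]
    have h2 : (P {ω | I0 ω = 1} + P {ω | I0 ω = 2}).toReal
        = (P {ω | I0 ω = 1}).toReal + (P {ω | I0 ω = 2}).toReal :=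
      ENNReal.toReal_add (measure_ne_top _ _) (measure_ne_top _ _)
    rw [← h2, ← this]
    simp
  -- identically distributed pairs
  have hmap : ∀ (k : Fin n) (S : Set (ℝ × ℕ)), MeasurableSet S →
      P ((fun ω => (X k ω, I k ω)) ⁻¹' S) = P ((fun ω => (X0 ω, I0 ω)) ⁻¹' S) := by
    intro k S hS
    rw [← Measure.map_apply ((hXmeas k).prodMk (hImeas k)) hS,
      ← Measure.map_apply ((hXmeas _).prodMk (hImeas _)) hS, hident k]
  -- decomposition of the law of X0
  have hdecomp : ∀ s : Set ℝ, MeasurableSet s →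
      (P (X0 ⁻¹' s)).toReal
        = (P ({ω | I0 ω = 1} ∩ X0 ⁻¹' s)).toReal + (P ({ω | I0 ω = 2} ∩ X0 ⁻¹' s)).toReal := by
    intro s hs
    have hdisj : Disjoint ({ω | I0 ω = 1} ∩ X0 ⁻¹' s) ({ω | I0 ω = 2} ∩ X0 ⁻¹' s) := by
      rw [Set.disjoint_left]; intro ω h1 h2
      have := h1.1; have := h2.1
      simp only [Set.mem_setOf_eq] at *; omega
    have hcover : ({ω | I0 ω = 1} ∩ X0 ⁻¹' s) ∪ ({ω | I0 ω = 2} ∩ X0 ⁻¹' s) = X0 ⁻¹' s := by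
      ext ω
      simp only [Set.mem_union, Set.mem_inter_iff, Set.mem_setOf_eq, Set.mem_preimage]
      constructor
      · rintro (⟨_, h⟩ | ⟨_, h⟩) <;> exact h
      · intro h; rcases hIrange _ ω with h1 | h2
        · exact Or.inl ⟨h1, h⟩
        · exact Or.inr ⟨h2, h⟩
    have hu : P (({ω | I0 ω = 1} ∩ X0 ⁻¹' s) ∪ ({ω | I0 ω = 2} ∩ X0 ⁻¹' s))
        = P ({ω | I0 ω = 1} ∩ X0 ⁻¹' s) + P ({ω | I0 ω = 2} ∩ X0 ⁻¹' s) :=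
      measure_union hdisj (((hImeas _) (measurableSet_singleton 2)).inter ((hXmeas _) hs))
    rw [hcover] at hu
    rw [hu, ENNReal.toReal_add (measure_ne_top _ _) (measure_ne_top _ _)]
  -- law of X0 on a measurable set
  have hlaw : ∀ s : Set ℝ, MeasurableSet s →
      (P (X0 ⁻¹' s)).toReal
        = α 1 * (volume (s ∩ Set.Icc (0 : ℝ) 1)).toReal
          + α 2 * (volume (s ∩ Set.Icc (1 - lam) (2 - lam))).toReal := by
    intro s hs
    rw [hdecomp s hs, hg1 s hs, hg2 s hs, integral_indicator_Icc_aux s hs,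
      integral_indicator_Icc_aux s hs]
  -- the main bound for a fixed k
  have main : ∀ k, (P {ω | Ihat k ω ≠ I k ω}).toReal ≤ lam + 1 / n + δ := by
    intro k
    by_cases hδ1 : 1 ≤ δ
    · -- trivial case: the bound exceeds 1
      have h1 : (P {ω | Ihat k ω ≠ I k ω}).toReal ≤ 1 := by
        have := prob_le_one (μ := P) (s := {ω | Ihat k ω ≠ I k ω})
        simpa using ENNReal.toReal_mono (by simp) this
      have : (0:ℝ) < 1 / n := by positivity
      linarith
    push_neg at hδ1
    set c : ℝ := 2 - lam - δ with hc
    set A : Set Ω := {ω | I k ω = 2 ∧ X k ω < 1} with hA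
    set B : Set Ω := {ω | I k ω = 1 ∧ 1 - lam - δ < X k ω} with hB
    set C : Set Ω := {ω | ∀ j, X j ω < c} with hCdef
    -- inclusion of the error event
    have hEsub : {ω | Ihat k ω ≠ I k ω} ⊆ A ∪ B ∪ C := by
      intro ω hω
      simp only [Set.mem_setOf_eq] at hω
      rcases hIrange k ω with h1 | h2
      · -- true label 1
        by_cases hx1 : 1 ≤ X k ω
        · exact Or.inl (Or.inr ⟨h1, by linarith⟩)
        · have hx2 : ¬ (X k ω ≤ 1 - lamhat ω) := fun h =>
            hω (by rw [hIhat, if_neg hx1, if_pos h, h1])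
          push_neg at hx2
          by_cases hl : lamhat ω ≤ lam + δ
          · exact Or.inl (Or.inr ⟨h1, by linarith⟩)
          · push_neg at hl
            refine Or.inr fun j => ?_
            have hsup := hlamhat ω
            have hle : X j ω ≤ Finset.univ.sup'
                ⟨⟨0, by omega⟩, Finset.mem_univ _⟩ (fun k => X k ω) :=
              Finset.le_sup' (fun k => X k ω) (Finset.mem_univ j)
            have : Finset.univ.sup' ⟨⟨0, by omega⟩, Finset.mem_univ _⟩
                (fun k => X k ω) = 2 - lamhat ω := by linarith
            rw [hc]; linarith
      · -- true label 2
        refine Or.inl (Or.inl ⟨h2, ?_⟩)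
        by_contra hx
        push_neg at hx
        exact hω (by rw [hIhat, if_pos hx, h2])
    -- bound for A
    have hAbound : (P A).toReal = α 2 * lam := by
      have hS : MeasurableSet {p : ℝ × ℕ | p.2 = 2 ∧ p.1 < 1} :=
        ((measurable_snd (measurableSet_singleton 2))).inter
          (measurable_fst measurableSet_Iio)
      have h1 : A = (fun ω => (X k ω, I k ω)) ⁻¹' {p : ℝ × ℕ | p.2 = 2 ∧ p.1 < 1} := rfl
      have h2 : (fun ω => (X0 ω, I0 ω)) ⁻¹' {p : ℝ × ℕ | p.2 = 2 ∧ p.1 < 1}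
          = {ω | I0 ω = 2} ∩ X0 ⁻¹' Set.Iio 1 := rfl
      rw [h1, hmap k _ hS, h2, hg2 _ measurableSet_Iio,
        integral_indicator_Icc_aux _ measurableSet_Iio]
      have hset : Set.Iio (1:ℝ) ∩ Set.Icc (1 - lam) (2 - lam) = Set.Ico (1 - lam) 1 := by
        ext x
        simp only [Set.mem_inter_iff, Set.mem_Iio, Set.mem_Icc, Set.mem_Ico]
        constructor
        · rintro ⟨h, h', _⟩; exact ⟨h', h⟩
        · rintro ⟨h, h'⟩; exact ⟨h', h, by linarith⟩
      rw [hset, Real.volume_Ico]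
      rw [show (1:ℝ) - (1 - lam) = lam by ring, ENNReal.toReal_ofReal hlam0.le]
    -- bound for B
    have hBbound : (P B).toReal ≤ α 1 * (lam + δ) := by
      have hS : MeasurableSet {p : ℝ × ℕ | p.2 = 1 ∧ 1 - lam - δ < p.1} :=
        ((measurable_snd (measurableSet_singleton 1))).inter
          (measurable_fst measurableSet_Ioi)
      have h1 : B = (fun ω => (X k ω, I k ω)) ⁻¹' {p : ℝ × ℕ | p.2 = 1 ∧ 1 - lam - δ < p.1} := rfl
      have h2 : (fun ω => (X0 ω, I0 ω)) ⁻¹' {p : ℝ × ℕ | p.2 = 1 ∧ 1 - lam - δ < p.1}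
          = {ω | I0 ω = 1} ∩ X0 ⁻¹' Set.Ioi (1 - lam - δ) := rfl
      rw [h1, hmap k _ hS, h2, hg1 _ measurableSet_Ioi,
        integral_indicator_Icc_aux _ measurableSet_Ioi]
      have hvol : volume (Set.Ioi (1 - lam - δ) ∩ Set.Icc (0:ℝ) 1)
          ≤ ENNReal.ofReal (lam + δ) := by
        have hsub : Set.Ioi (1 - lam - δ) ∩ Set.Icc (0:ℝ) 1 ⊆ Set.Icc (1 - lam - δ) 1 := by
          rintro x ⟨hx1, _, hx3⟩; exact ⟨le_of_lt hx1, hx3⟩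
        calc volume (Set.Ioi (1 - lam - δ) ∩ Set.Icc (0:ℝ) 1)
            ≤ volume (Set.Icc (1 - lam - δ) 1) := measure_mono hsub
          _ = ENNReal.ofReal (lam + δ) := by
              rw [Real.volume_Icc]; congr 1; ring
      have := ENNReal.toReal_mono ENNReal.ofReal_ne_top hvol
      rw [ENNReal.toReal_ofReal (by linarith)] at this
      exact mul_le_mul_of_nonneg_left this hα1p.le
    -- bound for C via independence
    have hCbound : (P C).toReal ≤ 1 / n := by
      have hS : MeasurableSet {p : ℝ × ℕ | p.1 < c} :=
        measurable_fst measurableSet_Iio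
      have h1 : C = ⋂ j ∈ Finset.univ, (fun ω => (X j ω, I j ω)) ⁻¹' {p : ℝ × ℕ | p.1 < c} := by
        ext ω; simp [hCdef]
      have hprod := hindep.measure_inter_preimage_eq_mul Finset.univ
        (sets := fun _ => {p : ℝ × ℕ | p.1 < c}) (fun i _ => hS)
      have hfac : ∀ j : Fin n, P ((fun ω => (X j ω, I j ω)) ⁻¹' {p : ℝ × ℕ | p.1 < c})
          = P (X0 ⁻¹' Set.Iio c) := fun j => hmap j _ hS
      have hPC : P C = (P (X0 ⁻¹' Set.Iio c)) ^ n := by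
        rw [h1, hprod]
        simp only [hfac]
        rw [Finset.prod_const, Finset.card_univ, Fintype.card_fin]
      -- value of the single-sample probability
      have hp : (P (X0 ⁻¹' Set.Iio c)).toReal ≤ 1 - α 2 * δ := by
        rw [hlaw _ measurableSet_Iio]
        have ht1 : (volume (Set.Iio c ∩ Set.Icc (0:ℝ) 1)).toReal ≤ 1 := by
          have : volume (Set.Iio c ∩ Set.Icc (0:ℝ) 1) ≤ volume (Set.Icc (0:ℝ) 1) :=
            measure_mono Set.inter_subset_right
          have := ENNReal.toReal_mono (by simp [Real.volume_Icc]) this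
          simpa [Real.volume_Icc] using this
        have ht2 : (volume (Set.Iio c ∩ Set.Icc (1 - lam) (2 - lam))).toReal = 1 - δ := by
          have hset : Set.Iio c ∩ Set.Icc (1 - lam) (2 - lam) = Set.Ico (1 - lam) c := by
            ext x
            simp only [Set.mem_inter_iff, Set.mem_Iio, Set.mem_Icc, Set.mem_Ico]
            constructor
            · rintro ⟨h, h', _⟩; exact ⟨h', h⟩
            · rintro ⟨h, h'⟩; exact ⟨h', h, by linarith⟩
          rw [hset, Real.volume_Ico, show c - (1 - lam) = 1 - δ by rw [hc]; ring,
            ENNReal.toReal_ofReal (by linarith)]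
        rw [ht2]
        nlinarith [mul_le_mul_of_nonneg_left ht1 hα1p.le]
      have hppos : (0:ℝ) ≤ (P (X0 ⁻¹' Set.Iio c)).toReal := ENNReal.toReal_nonneg
      have hαδ : 0 < α 2 * δ ∧ α 2 * δ < 1 := by
        constructor
        · positivity
        · nlinarith
      have hpow : (P C).toReal ≤ (1 - α 2 * δ) ^ n := by
        rw [hPC, ENNReal.toReal_pow]
        exact pow_le_pow_left₀ hppos hp n
      have hexp : (1 - α 2 * δ) ^ n ≤ Real.exp (-(α 2 * δ)) ^ n := by
        apply pow_le_pow_left₀ (by linarith [hαδ.2])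
        linarith [Real.add_one_le_exp (-(α 2 * δ))]
      have hval : Real.exp (-(α 2 * δ)) ^ n = 1 / (n:ℝ) ^ 2 := by
        rw [← Real.exp_nat_mul]
        have harg : (n:ℝ) * -(α 2 * δ) = -(2 * Real.log n) := by
          rw [hδdef]; field_simp
        rw [harg, Real.exp_neg, show (2:ℝ) * Real.log n = Real.log n + Real.log n by ring,
          Real.exp_add, Real.exp_log hnpos]
        rw [one_div, sq]
      have hlast : 1 / (n:ℝ) ^ 2 ≤ 1 / n := by
        apply one_div_le_one_div_of_le hnpos
        nlinarith
      calc (P C).toReal ≤ (1 - α 2 * δ) ^ n := hpow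
        _ ≤ Real.exp (-(α 2 * δ)) ^ n := hexp
        _ = 1 / (n:ℝ) ^ 2 := hval
        _ ≤ 1 / n := hlast
    -- combine
    have hPE : P {ω | Ihat k ω ≠ I k ω} ≤ P A + P B + P C := by
      calc P {ω | Ihat k ω ≠ I k ω} ≤ P (A ∪ B ∪ C) := measure_mono hEsub
        _ ≤ P (A ∪ B) + P C := measure_union_le _ _
        _ ≤ P A + P B + P C := add_le_add (measure_union_le _ _) le_rfl
    have hsumne : P A + P B + P C ≠ ⊤ :=
      ENNReal.add_ne_top.mpr ⟨ENNReal.add_ne_top.mpr ⟨measure_ne_top _ _, measure_ne_top _ _⟩,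
        measure_ne_top _ _⟩
    have hPEreal : (P {ω | Ihat k ω ≠ I k ω}).toReal
        ≤ (P A).toReal + (P B).toReal + (P C).toReal := by
      have := ENNReal.toReal_mono hsumne hPE
      rwa [ENNReal.toReal_add (ENNReal.add_ne_top.mpr
          ⟨measure_ne_top _ _, measure_ne_top _ _⟩) (measure_ne_top _ _),
        ENNReal.toReal_add (measure_ne_top _ _) (measure_ne_top _ _)] at this
    have : (P {ω | Ihat k ω ≠ I k ω}).toReal ≤ α 2 * lam + α 1 * (lam + δ) + 1 / n := by
      linarith
    nlinarith [this, hδpos, hα1l, hlam0]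
  refine ⟨main, ?_⟩
  exact Finset.sup'_le _ _ fun k _ => main k
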